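/- Let θ > 0, let K ≥ 1 be an integer, and let r₁ > r₂ > … > r_K > 0 be radii satisfying r_j > r_{j+1} + θ for 1 ≤ j ≤ K-1. Then (2πi)^{-K} ∮_{|z₁|=r₁} ⋯ ∮_{|z_K|=r_K} Π_{1≤A<B≤K} (z_A - z_B)/(z_A - z_B - θ) · Π_{j=1}^{K} z_j^{-1} dz_j = 1, where each contour is a positively oriented circle centered at the origin. -/

import Mathlib

/-- Iterated contour integral over nested circles centered at the origin:
`multiCircle K r f = ∮_{|z₁|=r 0} ⋯ ∮_{|z_K|=r (K-1)} f(z) dz_K ⋯ dz₁`. -/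
noncomputable def multiCircle : (K : ℕ) → (Fin K → ℝ) → ((Fin K → ℂ) → ℂ) → ℂ
  | 0, _, f => f (fun i => i.elim0)
  | K + 1, r, f =>
      ∮ z in C(0, r 0), multiCircle K (fun i => r i.succ) (fun zs => f (Fin.cons z zs))

open Complex Metric Finset
lemma multiCircle_const_mul : ∀ (K : ℕ) (r : Fin K → ℝ) (c : ℂ) (f : (Fin K → ℂ) → ℂ),
    multiCircle K r (fun z => c * f z) = c * multiCircle K r f
  | 0, r, c, f => rfl
  | K+1, r, c, f => by
      rw [multiCircle, multiCircle]
      have h1 : ∀ z : ℂ, multiCircle K (fun i => r i.succ) (fun zs => c * f (Fin.cons z zs))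
          = c * multiCircle K (fun i => r i.succ) (fun zs => f (Fin.cons z zs)) := fun z =>
        multiCircle_const_mul K _ c _
      simp only [h1]
      simpa [smul_eq_mul] using circleIntegral.integral_smul c
        (fun z => multiCircle K (fun i => r i.succ) (fun zs => f (Fin.cons z zs))) 0 (r 0)

lemma rgap (θ : ℝ) (K : ℕ) (r : Fin K → ℝ)
    (hnested : ∀ (i : Fin K) (h : (i : ℕ) + 1 < K), r ⟨(i : ℕ) + 1, h⟩ + θ < r i) :
    ∀ (n : ℕ) (h : n + 1 < K), r ⟨n+1, h⟩ + (n+1)*θ < r ⟨0, by omega⟩ := by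
  intro n
  induction n with
  | zero => intro h; simpa using hnested ⟨0, by omega⟩ h
  | succ n ih =>
      intro h
      have h1 : n + 1 < K := by omega
      have h2 := hnested ⟨n+1, h1⟩ h
      have h3 := ih h1
      push_cast at h3 ⊢
      simp only at h2
      linarith

lemma key (θ : ℝ) (hθ : 0 < θ) :
    ∀ (K : ℕ) (r : Fin K → ℝ), (∀ i, 0 < r i) →
    (∀ (i : Fin K) (h : (i : ℕ) + 1 < K), r ⟨(i : ℕ) + 1, h⟩ + θ < r i) →
    ∀ (m : ℕ) (w : Fin m → ℂ),
    (∀ a, (K : ℝ) * θ < ‖w a‖ ∧ ∀ j : Fin K, r j + θ < ‖w a‖) →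
    multiCircle K r (fun z =>
        (∏ A : Fin K, ∏ B ∈ Finset.univ.filter (fun B => A < B),
            (z A - z B) / (z A - z B - (θ : ℂ))) *
          (∏ a, ∏ B, (w a - z B) / (w a - z B - (θ : ℂ))) *
          ∏ j, (z j)⁻¹)
      = (2 * Real.pi * Complex.I) ^ K * ∏ a, w a / (w a - (K : ℂ) * θ) := by
  intro K
  induction K with
  | zero =>
      intro r _ _ m w hw
      have hw0 : ∀ a, w a ≠ 0 := by
        intro a h
        have := (hw a).1
        rw [h] at this
        simp at this
      simp only [multiCircle]
      simp [Finset.prod_congr rfl (fun a _ => div_self (hw0 a))]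
  | succ K ih =>
      intro r hr hnested m w hw
      have hr0 : 0 < r 0 := hr 0
      have hr00 : r 0 = r ⟨0, by omega⟩ := rfl
      -- K * θ < r 0
      have hKθ : (K : ℝ) * θ < r 0 := by
        cases K with
        | zero => simpa using hr0
        | succ n =>
            have h1 := rgap θ (n+2) r hnested n (by omega)
            have h2 := hr ⟨n+1, by omega⟩
            rw [hr00]
            push_cast at h1 ⊢
            linarith
      have hrj : ∀ j : Fin K, r j.succ + θ < r 0 := by
        intro j
        have h1 := rgap θ (K+1) r hnested j (by omega)
        have h2 : (1 : ℝ) ≤ ((j : ℕ) + 1 : ℕ) := by exact_mod_cast Nat.succ_le_succ (Nat.zero_le _)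
        have h3 : θ ≤ (((j : ℕ) + 1 : ℕ) : ℝ) * θ := le_mul_of_one_le_left hθ.le h2
        rw [hr00]
        have hj : r j.succ = r ⟨(j : ℕ) + 1, by omega⟩ := rfl
        rw [hj]
        push_cast at h1 h3 ⊢
        linarith
      have hwK : ∀ a, (K : ℝ) * θ < ‖w a‖ := by
        intro a
        have := (hw a).1
        push_cast at this
        nlinarith
      have hw0 : ∀ a, r 0 + θ < ‖w a‖ := fun a => (hw a).2 0
      have hwKne : ∀ a, w a - (K : ℂ) * θ ≠ 0 := by
        intro a h
        rw [sub_eq_zero] at h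
        have : ‖w a‖ = (K : ℝ) * θ := by
          rw [h]
          rw [show ((K : ℂ) * θ) = (((K : ℝ) * θ : ℝ) : ℂ) by push_cast; ring]
          rw [Complex.norm_real, Real.norm_eq_abs, _root_.abs_of_nonneg (by positivity)]
        linarith [hwK a]
      have hwK1ne : ∀ a, w a - ((K : ℂ) + 1) * θ ≠ 0 := by
        intro a h
        rw [sub_eq_zero] at h
        have := (hw a).1
        have : ‖w a‖ = ((K : ℝ) + 1) * θ := by
          rw [h]
          rw [show (((K : ℂ) + 1) * θ) = ((((K : ℝ) + 1) * θ : ℝ) : ℂ) by push_cast; ring]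
          rw [Complex.norm_real, Real.norm_eq_abs, _root_.abs_of_nonneg (by positivity)]
        have h2 := (hw a).1
        push_cast at h2
        linarith
      -- the spectator-product function
      set P : ℂ → ℂ := fun z => ∏ a, (w a - z) / (w a - z - (θ : ℂ)) with hP
      set Q : ℂ := ∏ a, w a / (w a - (K : ℂ) * θ) with hQ
      set C0 : ℂ := (2 * Real.pi * Complex.I) ^ K * Q with hC0
      -- differentiability of P on the closed ball
      have hPdiff : ∀ x ∈ closedBall (0 : ℂ) (r 0), DifferentiableAt ℂ P x := by
        intro x hx
        have hxle : ‖x‖ ≤ r 0 := by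
          simpa using mem_closedBall_zero_iff.mp hx
        apply DifferentiableAt.fun_finsetProd
        intro a _
        apply DifferentiableAt.div
        · fun_prop
        · fun_prop
        · intro h
          have : w a = x + θ := by linear_combination h
          have : ‖w a‖ ≤ r 0 + θ := by
            rw [this]
            calc ‖x + (θ : ℂ)‖ ≤ ‖x‖ + ‖(θ : ℂ)‖ :=
                norm_add_le _ _
            _ ≤ r 0 + θ := by
                rw [Complex.norm_real, Real.norm_eq_abs, _root_.abs_of_nonneg hθ.le]
                linarith
          linarith [hw0 a]
      -- Cauchy integral formula
      have hcauchy : (∮ z in C(0, r 0), ((z : ℂ) - (K : ℂ) * θ)⁻¹ * P z)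
          = (2 * Real.pi * Complex.I) * P ((K : ℂ) * θ) := by
        have hball : ((K : ℂ) * θ) ∈ ball (0 : ℂ) (r 0) := by
          rw [mem_ball_zero_iff]
          rw [show ((K : ℂ) * θ) = (((K : ℝ) * θ : ℝ) : ℂ) by push_cast; ring]
          rw [Complex.norm_real, Real.norm_eq_abs, _root_.abs_of_nonneg (by positivity)]
          exact hKθ
        have := Complex.circleIntegral_sub_inv_smul_of_differentiable_on_off_countable
          (s := ∅) Set.countable_empty hball
          (fun x hx => (hPdiff x hx).continuousAt.continuousWithinAt)
          (fun x hx => hPdiff x (ball_subset_closedBall hx.1))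
        simpa [smul_eq_mul] using this
      -- evaluate the inner (K-fold) integral on the sphere
      have hinner : Set.EqOn
          (fun z => multiCircle K (fun i => r i.succ) (fun zs =>
            (∏ A : Fin (K+1), ∏ B ∈ Finset.univ.filter (fun B => A < B),
                ((Fin.cons z zs : Fin (K+1) → ℂ) A - (Fin.cons z zs : Fin (K+1) → ℂ) B) /
                  ((Fin.cons z zs : Fin (K+1) → ℂ) A - (Fin.cons z zs : Fin (K+1) → ℂ) B - (θ : ℂ))) *
              (∏ a, ∏ B, (w a - (Fin.cons z zs : Fin (K+1) → ℂ) B) /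
                  (w a - (Fin.cons z zs : Fin (K+1) → ℂ) B - (θ : ℂ))) *
              ∏ j, ((Fin.cons z zs : Fin (K+1) → ℂ) j)⁻¹))
          (fun z => C0 * (((z : ℂ) - (K : ℂ) * θ)⁻¹ * P z))
          (sphere (0 : ℂ) (r 0)) := by
        intro z hz
        have hzabs : ‖z‖ = r 0 := by
          simpa using mem_sphere_zero_iff_norm.mp hz
        have hz0 : z ≠ 0 := by
          intro h; rw [h] at hzabs; simp at hzabs; linarith
        -- regroup the integrand
        have hregroup : ∀ zs : Fin K → ℂ,
            (∏ A : Fin (K+1), ∏ B ∈ Finset.univ.filter (fun B => A < B),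
                ((Fin.cons z zs : Fin (K+1) → ℂ) A - (Fin.cons z zs : Fin (K+1) → ℂ) B) /
                  ((Fin.cons z zs : Fin (K+1) → ℂ) A - (Fin.cons z zs : Fin (K+1) → ℂ) B - (θ : ℂ))) *
              (∏ a, ∏ B, (w a - (Fin.cons z zs : Fin (K+1) → ℂ) B) /
                  (w a - (Fin.cons z zs : Fin (K+1) → ℂ) B - (θ : ℂ))) *
              ∏ j, ((Fin.cons z zs : Fin (K+1) → ℂ) j)⁻¹
            = (z⁻¹ * P z) *
              ((∏ A : Fin K, ∏ B ∈ Finset.univ.filter (fun B => A < B),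
                  (zs A - zs B) / (zs A - zs B - (θ : ℂ))) *
                (∏ a : Fin (m+1), ∏ B : Fin K,
                    ((Fin.cons z w : Fin (m+1) → ℂ) a - zs B) /
                      ((Fin.cons z w : Fin (m+1) → ℂ) a - zs B - (θ : ℂ))) *
                ∏ j, (zs j)⁻¹) := by
          intro zs
          simp only [hP, Finset.prod_filter, Fin.prod_univ_succ, Fin.cons_zero, Fin.cons_succ,
            Fin.succ_pos, if_true, Fin.succ_lt_succ_iff, Fin.not_lt_zero, if_false,
            lt_self_iff_false, one_mul, Finset.prod_mul_distrib]
          ring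
        simp only [hregroup]
        rw [multiCircle_const_mul]
        rw [ih (fun i => r i.succ) (fun i => hr i.succ)
          (by
            intro i h
            have h2 : (i : ℕ) + 1 + 1 < K + 1 := by omega
            have := hnested ⟨(i : ℕ) + 1, by omega⟩ h2
            exact this)
          (m+1) (Fin.cons z w)
          (by
            intro a
            refine Fin.cases ?_ ?_ a
            · refine ⟨?_, ?_⟩
              · simpa [hzabs] using hKθ
              · intro j; simpa [hzabs] using hrj j
            · intro a'
              refine ⟨hwK a', fun j => (hw a').2 j.succ⟩)]
        -- now both sides are explicit; simplify the Fin (m+1) product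
        rw [Fin.prod_univ_succ]
        simp only [Fin.cons_zero, Fin.cons_succ]
        have hzz : z⁻¹ * z = 1 := inv_mul_cancel₀ hz0
        rw [hC0, hQ, hP]
        rw [div_eq_mul_inv z ((z : ℂ) - (K : ℂ) * θ)]
        linear_combination ((2 * (Real.pi : ℂ) * Complex.I) ^ K *
          (∏ a, w a / (w a - (K : ℂ) * θ)) * (∏ a, (w a - z) / (w a - z - (θ : ℂ))) *
          ((z : ℂ) - (K : ℂ) * θ)⁻¹) * hzz
      -- put it all together
      rw [multiCircle]
      rw [circleIntegral.integral_congr hr0.le hinner]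
      have hpull : (∮ z in C(0, r 0), C0 * (((z : ℂ) - (K : ℂ) * θ)⁻¹ * P z))
          = C0 * ∮ z in C(0, r 0), ((z : ℂ) - (K : ℂ) * θ)⁻¹ * P z := by
        simpa [smul_eq_mul] using circleIntegral.integral_smul C0
          (fun z => ((z : ℂ) - (K : ℂ) * θ)⁻¹ * P z) 0 (r 0)
      rw [hpull, hcauchy]
      rw [hC0, hQ, hP]
      have hcomb : (∏ a, w a / (w a - (K : ℂ) * θ)) *
          (∏ a, (w a - (K : ℂ) * θ) / (w a - (K : ℂ) * θ - (θ : ℂ)))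
          = ∏ a, w a / (w a - ((K : ℕ) + 1 : ℂ) * θ) := by
        rw [← Finset.prod_mul_distrib]
        refine Finset.prod_congr rfl fun a _ => ?_
        have h1 := hwKne a
        have h2 : w a - ((K : ℂ) + 1) * θ ≠ 0 := hwK1ne a
        have h3 : w a - (K : ℂ) * θ - (θ : ℂ) ≠ 0 := by
          intro h; apply h2; linear_combination h
        field_simp
        rw [eq_div_iff (by intro h; apply h2; linear_combination h)]
        push_cast
        ring
      push_cast
      push_cast at hcomb
      rw [pow_succ]
      linear_combination (2 * (Real.pi : ℂ) * Complex.I) ^ K *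
        (2 * (Real.pi : ℂ) * Complex.I) * hcomb

/-- Evaluation by iterated residues of the contour integral verifying the
`t = 0`, `n⃗ = (1,…,1)` initial condition of the moment formula for the
strict-weak polymer. -/
theorem multiCircle_residue_eval
    (θ : ℝ) (hθ : 0 < θ) (K : ℕ) (hK : 1 ≤ K)
    (r : Fin K → ℝ) (hr : ∀ i, 0 < r i)
    (hnested : ∀ (i : Fin K) (h : (i : ℕ) + 1 < K), r ⟨(i : ℕ) + 1, h⟩ + θ < r i) :
    ((2 * (Real.pi : ℂ) * Complex.I) ^ K)⁻¹ *
        multiCircle K r (fun z =>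
          (∏ A : Fin K, ∏ B ∈ Finset.univ.filter (fun B => A < B),
              (z A - z B) / (z A - z B - (θ : ℂ))) *
            ∏ j, (z j)⁻¹) = 1 := by
  have h := key θ hθ K r hr hnested 0 (Fin.elim0) (fun a => a.elim0)
  have heq : (fun z : Fin K → ℂ =>
      (∏ A : Fin K, ∏ B ∈ Finset.univ.filter (fun B => A < B),
          (z A - z B) / (z A - z B - (θ : ℂ))) *
        (∏ a : Fin 0, ∏ B, (Fin.elim0 a - z B) / (Fin.elim0 a - z B - (θ : ℂ))) *
        ∏ j, (z j)⁻¹)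
      = (fun z : Fin K → ℂ =>
      (∏ A : Fin K, ∏ B ∈ Finset.univ.filter (fun B => A < B),
          (z A - z B) / (z A - z B - (θ : ℂ))) *
        ∏ j, (z j)⁻¹) := by
    funext z; simp
  rw [heq] at h
  rw [h]
  simp only [Finset.univ_eq_empty, Finset.prod_empty, mul_one]
  exact inv_mul_cancel₀ (pow_ne_zero _ Complex.two_pi_I_ne_zero)
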